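/- Under the standing assumptions, for any two distinct squares Q and Q' of S of the same color (both red or both black) there exists c : ℤ×ℤ → ℝ×ℝ supported on the interior vertices such that (Dc)(Q) = 1, (Dc)(Q') = −1, and (Dc)(Q'') = 0 for every other square Q'' of S. -/

import Mathlib

/-- The closed unit square `[i,i+1] × [j,j+1] ⊆ ℝ²` indexed by `q = (i,j) ∈ ℤ × ℤ`. -/
def unitSq (q : ℤ × ℤ) : Set (ℝ × ℝ) :=
  Set.Icc (q.1 : ℝ) (q.1 + 1) ×ˢ Set.Icc (q.2 : ℝ) (q.2 + 1)

/-- `Ω̄`, the union of the closed squares of the mesh `S`. -/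
def meshRegion (S : Finset (ℤ × ℤ)) : Set (ℝ × ℝ) := ⋃ q ∈ S, unitSq q

/-- `v` is an interior vertex of `S`: all four grid squares having `v` as a corner belong
to `S`. -/
abbrev interiorVertex (S : Finset (ℤ × ℤ)) (v : ℤ × ℤ) : Prop :=
  (v.1 - 1, v.2 - 1) ∈ S ∧ (v.1 - 1, v.2) ∈ S ∧ (v.1, v.2 - 1) ∈ S ∧ v ∈ S

/-- `v` is a mesh vertex of `S`: it is a corner of some square of `S`. -/
abbrev meshVertex (S : Finset (ℤ × ℤ)) (v : ℤ × ℤ) : Prop :=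
  (v.1 - 1, v.2 - 1) ∈ S ∨ (v.1 - 1, v.2) ∈ S ∨ (v.1, v.2 - 1) ∈ S ∨ v ∈ S

/-- `v` is a boundary vertex of `S`: a mesh vertex which is not interior. -/
abbrev boundaryVertex (S : Finset (ℤ × ℤ)) (v : ℤ × ℤ) : Prop :=
  meshVertex S v ∧ ¬ interiorVertex S v

/-- The four corners of the square indexed by `q`. -/
def cornersF (q : ℤ × ℤ) : Finset (ℤ × ℤ) :=
  {q, (q.1 + 1, q.2), (q.1, q.2 + 1), (q.1 + 1, q.2 + 1)}

/-- `q` is an interior square: all four of its corners are interior vertices. -/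
abbrev interiorSquare (S : Finset (ℤ × ℤ)) (q : ℤ × ℤ) : Prop :=
  interiorVertex S q ∧ interiorVertex S (q.1 + 1, q.2) ∧
    interiorVertex S (q.1, q.2 + 1) ∧ interiorVertex S (q.1 + 1, q.2 + 1)

/-- The square `(i,j)` is red if `i + j` is even (and black otherwise). -/
abbrev isRed (q : ℤ × ℤ) : Prop := (q.1 + q.2) % 2 = 0

/-- The standing assumptions on the mesh `S`: it is nonempty, `Ω` is connected and simply
connected, no square has four boundary corners, every grid edge shared by two squares of `S`
has an interior endpoint, and no square has exactly two boundary corners lying at diagonally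
opposite corners. -/
structure Standing (S : Finset (ℤ × ℤ)) : Prop where
  nonempty : S.Nonempty
  connected : IsConnected (interior (meshRegion S))
  simplyConnected : SimplyConnectedSpace ↥(interior (meshRegion S))
  noFourBoundary : ∀ q ∈ S,
    ¬ (boundaryVertex S q ∧ boundaryVertex S (q.1 + 1, q.2) ∧
        boundaryVertex S (q.1, q.2 + 1) ∧ boundaryVertex S (q.1 + 1, q.2 + 1))
  edgeH : ∀ v : ℤ × ℤ, v ∈ S → (v.1, v.2 - 1) ∈ S →
    interiorVertex S v ∨ interiorVertex S (v.1 + 1, v.2)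
  edgeV : ∀ v : ℤ × ℤ, v ∈ S → (v.1 - 1, v.2) ∈ S →
    interiorVertex S v ∨ interiorVertex S (v.1, v.2 + 1)
  noDiagOne : ∀ q ∈ S,
    ¬ (boundaryVertex S q ∧ boundaryVertex S (q.1 + 1, q.2 + 1) ∧
        interiorVertex S (q.1 + 1, q.2) ∧ interiorVertex S (q.1, q.2 + 1))
  noDiagTwo : ∀ q ∈ S,
    ¬ (boundaryVertex S (q.1 + 1, q.2) ∧ boundaryVertex S (q.1, q.2 + 1) ∧
        interiorVertex S q ∧ interiorVertex S (q.1 + 1, q.2 + 1))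

/-- The discrete `x`-derivative `∂ˣc(Q)` of a scalar vertex function on the square `Q`. -/
def dX (c : ℤ × ℤ → ℝ) (q : ℤ × ℤ) : ℝ :=
  c (q.1 + 1, q.2) + c (q.1 + 1, q.2 + 1) - c (q.1, q.2) - c (q.1, q.2 + 1)

/-- The discrete `y`-derivative `∂ʸc(Q)` of a scalar vertex function on the square `Q`. -/
def dY (c : ℤ × ℤ → ℝ) (q : ℤ × ℤ) : ℝ :=
  c (q.1, q.2 + 1) + c (q.1 + 1, q.2 + 1) - c (q.1, q.2) - c (q.1 + 1, q.2)

/-- The discrete divergence `(Dc)(Q) = ∂ˣc¹(Q) + ∂ʸc²(Q)`. -/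
def Ddiv (c : ℤ × ℤ → ℝ × ℝ) (q : ℤ × ℤ) : ℝ :=
  dX (fun v => (c v).1) q + dY (fun v => (c v).2) q

/-- The discrete curl `(Cc)(Q) = ∂ˣc²(Q) − ∂ʸc¹(Q)`. -/
def Ccurl (c : ℤ × ℤ → ℝ × ℝ) (q : ℤ × ℤ) : ℝ :=
  dX (fun v => (c v).2) q - dY (fun v => (c v).1) q

section Aux

variable (S : Finset (ℤ × ℤ))

/-- dipole vector field concentrated at one vertex -/
def dip (v : ℤ × ℤ) (t s : ℝ) : ℤ × ℤ → ℝ × ℝ :=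
  fun w => (if w = v then t else 0, if w = v then s else 0)

lemma Ddiv_add (f g : ℤ × ℤ → ℝ × ℝ) (q : ℤ × ℤ) :
    Ddiv (fun v => f v + g v) q = Ddiv f q + Ddiv g q := by
  simp only [Ddiv, dX, dY, Prod.fst_add, Prod.snd_add]; ring

lemma Ddiv_dip (v q : ℤ × ℤ) (t s : ℝ) :
    Ddiv (dip v t s) q =
      (if (q.1 + 1, q.2 + 1) = v then t + s else 0) +
      (if (q.1 + 1, q.2) = v then t - s else 0) +
      (if (q.1, q.2 + 1) = v then s - t else 0) +
      (if q = v then -(t + s) else 0) := by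
  rcases q with ⟨i, j⟩
  rcases v with ⟨a, b⟩
  simp only [Ddiv, dX, dY, dip, Prod.mk.injEq]
  split_ifs with h1 h2 h3 h4 h5 h6 h7 h8 h9 h10 h11 h12 h13 h14 h15 h16 h17 h18 h19 h20 h21 h22 h23 h24 h25 h26 h27 h28 h29 h30 h31 h32 h33 h34 h35 h36 h37 h38 h39 h40 <;> first | ring1 | (exfalso; omega)

end Aux

/-- Diagonal adjacency across an interior vertex. -/
def Dadj (S : Finset (ℤ × ℤ)) (a c : ℤ × ℤ) : Prop :=
  (c = (a.1 + 1, a.2 + 1) ∧ interiorVertex S (a.1 + 1, a.2 + 1)) ∨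
  (a = (c.1 + 1, c.2 + 1) ∧ interiorVertex S (c.1 + 1, c.2 + 1)) ∨
  (c = (a.1 + 1, a.2 - 1) ∧ interiorVertex S (a.1 + 1, a.2)) ∨
  (a = (c.1 + 1, c.2 - 1) ∧ interiorVertex S (c.1 + 1, c.2))

lemma Dadj_symm {S : Finset (ℤ × ℤ)} : Symmetric (Dadj S) := by
  intro a c hac
  rcases hac with h | h | h | h
  · exact Or.inr (Or.inl h)
  · exact Or.inl h
  · exact Or.inr (Or.inr (Or.inr h))
  · exact Or.inr (Or.inr (Or.inl h))

/-- a single diagonal step is realized by a dipole -/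
lemma dadj_dipole {S : Finset (ℤ × ℤ)} {a c : ℤ × ℤ} (h : Dadj S a c) :
    ∃ f : ℤ × ℤ → ℝ × ℝ, (∀ v : ℤ × ℤ, ¬ interiorVertex S v → f v = 0) ∧
      ∀ q : ℤ × ℤ, Ddiv f q = (if q = a then (1:ℝ) else 0) - (if q = c then (1:ℝ) else 0) := by
  rcases h with ⟨hc, hv⟩ | ⟨hc, hv⟩ | ⟨hc, hv⟩ | ⟨hc, hv⟩
  · refine ⟨dip (a.1 + 1, a.2 + 1) (1/2) (1/2), ?_, ?_⟩
    · intro v hvi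
      rcases eq_or_ne v (a.1 + 1, a.2 + 1) with rfl | hvv
      · exact absurd hv hvi
      · simp [dip, if_neg hvv]
    · intro q
      rw [Ddiv_dip, hc]
      rcases q with ⟨i, j⟩; rcases a with ⟨x, y⟩
      simp only [Prod.mk.injEq]
      split_ifs with h1 h2 h3 h4 h5 h6 h7 h8 h9 h10 h11 h12 h13 h14 h15 h16 h17 h18 h19 h20 h21 h22 h23 h24 h25 h26 h27 h28 h29 h30 h31 h32 h33 h34 h35 h36 h37 h38 h39 h40 <;> first | ring1 | (exfalso; omega)
  · refine ⟨dip (c.1 + 1, c.2 + 1) (-(1/2)) (-(1/2)), ?_, ?_⟩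
    · intro v hvi
      rcases eq_or_ne v (c.1 + 1, c.2 + 1) with rfl | hvv
      · exact absurd hv hvi
      · simp [dip, if_neg hvv]
    · intro q
      rw [Ddiv_dip, hc]
      rcases q with ⟨i, j⟩; rcases c with ⟨x, y⟩
      simp only [Prod.mk.injEq]
      split_ifs with h1 h2 h3 h4 h5 h6 h7 h8 h9 h10 h11 h12 h13 h14 h15 h16 h17 h18 h19 h20 h21 h22 h23 h24 h25 h26 h27 h28 h29 h30 h31 h32 h33 h34 h35 h36 h37 h38 h39 h40 <;> first | ring1 | (exfalso; omega)
  · refine ⟨dip (a.1 + 1, a.2) (1/2) (-(1/2)), ?_, ?_⟩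
    · intro v hvi
      rcases eq_or_ne v (a.1 + 1, a.2) with rfl | hvv
      · exact absurd hv hvi
      · simp [dip, if_neg hvv]
    · intro q
      rw [Ddiv_dip, hc]
      rcases q with ⟨i, j⟩; rcases a with ⟨x, y⟩
      simp only [Prod.mk.injEq]
      split_ifs with h1 h2 h3 h4 h5 h6 h7 h8 h9 h10 h11 h12 h13 h14 h15 h16 h17 h18 h19 h20 h21 h22 h23 h24 h25 h26 h27 h28 h29 h30 h31 h32 h33 h34 h35 h36 h37 h38 h39 h40 <;> first | ring1 | (exfalso; omega)
  · refine ⟨dip (c.1 + 1, c.2) (-(1/2)) (1/2), ?_, ?_⟩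
    · intro v hvi
      rcases eq_or_ne v (c.1 + 1, c.2) with rfl | hvv
      · exact absurd hv hvi
      · simp [dip, if_neg hvv]
    · intro q
      rw [Ddiv_dip, hc]
      rcases q with ⟨i, j⟩; rcases c with ⟨x, y⟩
      simp only [Prod.mk.injEq]
      split_ifs with h1 h2 h3 h4 h5 h6 h7 h8 h9 h10 h11 h12 h13 h14 h15 h16 h17 h18 h19 h20 h21 h22 h23 h24 h25 h26 h27 h28 h29 h30 h31 h32 h33 h34 h35 h36 h37 h38 h39 h40 <;> first | ring1 | (exfalso; omega)

/-- a diagonal path is realized by a sum of dipoles -/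
lemma dreach_dipole {S : Finset (ℤ × ℤ)} {a c : ℤ × ℤ}
    (h : Relation.ReflTransGen (Dadj S) a c) :
    ∃ f : ℤ × ℤ → ℝ × ℝ, (∀ v : ℤ × ℤ, ¬ interiorVertex S v → f v = 0) ∧
      ∀ q : ℤ × ℤ, Ddiv f q = (if q = a then (1:ℝ) else 0) - (if q = c then (1:ℝ) else 0) := by
  induction h with
  | refl => exact ⟨fun _ => 0, fun _ _ => rfl, fun q => by simp [Ddiv, dX, dY]⟩
  | tail hab hbc ih =>
      obtain ⟨f, hf0, hf⟩ := ih
      obtain ⟨g, hg0, hg⟩ := dadj_dipole hbc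
      refine ⟨fun v => f v + g v, fun v hv => by show f v + g v = 0; rw [hf0 v hv, hg0 v hv, add_zero], fun q => ?_⟩
      rw [Ddiv_add, hf, hg]; ring

/-- Edge adjacency of squares of the mesh. -/
def Eadj (S : Finset (ℤ × ℤ)) (a b : ℤ × ℤ) : Prop :=
  a ∈ S ∧ b ∈ S ∧
    (b = (a.1 + 1, a.2) ∨ b = (a.1 - 1, a.2) ∨ b = (a.1, a.2 + 1) ∨ b = (a.1, a.2 - 1))

lemma Eadj_symm {S : Finset (ℤ × ℤ)} : Symmetric (Eadj S) := by
  rintro ⟨i, j⟩ ⟨k, l⟩ ⟨ha, hb, hd⟩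
  refine ⟨hb, ha, ?_⟩
  simp only [Prod.mk.injEq] at hd ⊢
  omega

lemma dadj_NE' {S : Finset (ℤ × ℤ)} {a c : ℤ × ℤ} (x y : ℤ) (hv : interiorVertex S (x, y))
    (h1 : a.1 = x - 1) (h2 : a.2 = y - 1) (h3 : c.1 = x) (h4 : c.2 = y) : Dadj S a c := by
  have hc : c = (a.1 + 1, a.2 + 1) := by
    rw [Prod.ext_iff]; constructor <;> simp <;> omega
  have hv' : (a.1 + 1, a.2 + 1) = (x, y) := by
    rw [Prod.ext_iff]; constructor <;> simp <;> omega
  exact Or.inl ⟨hc, hv' ▸ hv⟩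

lemma dadj_NW' {S : Finset (ℤ × ℤ)} {a c : ℤ × ℤ} (x y : ℤ) (hv : interiorVertex S (x, y))
    (h1 : a.1 = x - 1) (h2 : a.2 = y) (h3 : c.1 = x) (h4 : c.2 = y - 1) : Dadj S a c := by
  have hc : c = (a.1 + 1, a.2 - 1) := by
    rw [Prod.ext_iff]; constructor <;> simp <;> omega
  have hv' : (a.1 + 1, a.2) = (x, y) := by
    rw [Prod.ext_iff]; constructor <;> simp <;> omega
  exact Or.inr (Or.inr (Or.inl ⟨hc, hv' ▸ hv⟩))

abbrev DR (S : Finset (ℤ × ℤ)) := Relation.ReflTransGen (Dadj S)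

lemma DR_symm {S : Finset (ℤ × ℤ)} {a c : ℤ × ℤ} (h : DR S a c) : DR S c a :=
  (@Relation.ReflTransGen.stdSymm _ (Dadj S) ⟨fun _ _ hab => Dadj_symm hab⟩).symm _ _ h

section Cases

variable {S : Finset (ℤ × ℤ)}

lemma meshB {i j : ℤ} (hb : (i, j) ∈ S) : meshVertex S (i, j) :=
  Or.inr (Or.inr (Or.inr hb))

lemma mesh11 {i j : ℤ} (hb : (i, j) ∈ S) : meshVertex S (i + 1, j + 1) :=
  Or.inl (by simpa using hb)

lemma mesh10 {i j : ℤ} (hb : (i, j) ∈ S) : meshVertex S (i + 1, j) :=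
  Or.inr (Or.inl (by simpa using hb))

lemma mesh01 {i j : ℤ} (hb : (i, j) ∈ S) : meshVertex S (i, j + 1) :=
  Or.inr (Or.inr (Or.inl (by simpa using hb)))

lemma diag1 (h : Standing S) {i j : ℤ} (hb : (i, j) ∈ S)
    (h10 : interiorVertex S (i + 1, j)) (h01 : interiorVertex S (i, j + 1)) :
    interiorVertex S (i, j) ∨ interiorVertex S (i + 1, j + 1) := by
  by_cases h00 : interiorVertex S (i, j)
  · exact Or.inl h00
  by_cases h11 : interiorVertex S (i + 1, j + 1)
  · exact Or.inr h11
  exact absurd ⟨⟨meshB hb, h00⟩, ⟨mesh11 hb, h11⟩, h10, h01⟩ (h.noDiagOne (i, j) hb)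

lemma diag2 (h : Standing S) {i j : ℤ} (hb : (i, j) ∈ S)
    (h00 : interiorVertex S (i, j)) (h11 : interiorVertex S (i + 1, j + 1)) :
    interiorVertex S (i + 1, j) ∨ interiorVertex S (i, j + 1) := by
  by_cases h10 : interiorVertex S (i + 1, j)
  · exact Or.inl h10
  by_cases h01 : interiorVertex S (i, j + 1)
  · exact Or.inr h01
  exact absurd ⟨⟨mesh10 hb, h10⟩, ⟨mesh01 hb, h01⟩, h00, h11⟩ (h.noDiagTwo (i, j) hb)

lemma edgeL (h : Standing S) {i j : ℤ} (hb : (i, j) ∈ S) (ha : (i - 1, j) ∈ S) :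
    interiorVertex S (i, j) ∨ interiorVertex S (i, j + 1) := h.edgeV (i, j) hb ha

lemma edgeR (h : Standing S) {i j : ℤ} (hb : (i, j) ∈ S) (hc : (i + 1, j) ∈ S) :
    interiorVertex S (i + 1, j) ∨ interiorVertex S (i + 1, j + 1) :=
  h.edgeV (i + 1, j) hc (by simpa using hb)

lemma edgeD (h : Standing S) {i j : ℤ} (hb : (i, j) ∈ S) (hc : (i, j - 1) ∈ S) :
    interiorVertex S (i, j) ∨ interiorVertex S (i + 1, j) := h.edgeH (i, j) hb hc

lemma edgeU (h : Standing S) {i j : ℤ} (hb : (i, j) ∈ S) (hc : (i, j + 1) ∈ S) :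
    interiorVertex S (i, j + 1) ∨ interiorVertex S (i + 1, j + 1) :=
  h.edgeH (i, j + 1) hc (by simpa using hb)

lemma caseLR (h : Standing S) (i j : ℤ) (hb : (i, j) ∈ S) (ha : (i - 1, j) ∈ S)
    (hc : (i + 1, j) ∈ S) : DR S (i - 1, j) (i + 1, j) := by
  have pathA : interiorVertex S (i, j) → interiorVertex S (i + 1, j) →
      DR S (i - 1, j) (i + 1, j) := by
    intro h00 h10
    refine Relation.ReflTransGen.head (b := (i, j - 1)) ?_ (Relation.ReflTransGen.single ?_)
    · exact dadj_NW' i j h00 (by simp) (by simp) (by simp) (by simp)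
    · exact dadj_NE' (i + 1) j h10 (by simp) (by simp) (by simp) (by simp)
  have pathB : interiorVertex S (i, j + 1) → interiorVertex S (i + 1, j + 1) →
      DR S (i - 1, j) (i + 1, j) := by
    intro h01 h11
    refine Relation.ReflTransGen.head (b := (i, j + 1)) ?_ (Relation.ReflTransGen.single ?_)
    · exact dadj_NE' i (j + 1) h01 (by simp) (by simp) (by simp) (by simp)
    · exact dadj_NW' (i + 1) (j + 1) h11 (by simp) (by simp) (by simp) (by simp)
  rcases edgeL h hb ha with h00 | h01 <;> rcases edgeR h hb hc with h10 | h11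
  · exact pathA h00 h10
  · rcases diag2 h hb h00 h11 with h10 | h01
    · exact pathA h00 h10
    · exact pathB h01 h11
  · rcases diag1 h hb h10 h01 with h00 | h11
    · exact pathA h00 h10
    · exact pathB h01 h11
  · exact pathB h01 h11

lemma caseDU (h : Standing S) (i j : ℤ) (hb : (i, j) ∈ S) (ha : (i, j - 1) ∈ S)
    (hc : (i, j + 1) ∈ S) : DR S (i, j - 1) (i, j + 1) := by
  have pathA : interiorVertex S (i, j) → interiorVertex S (i, j + 1) →
      DR S (i, j - 1) (i, j + 1) := by
    intro h00 h01
    refine Relation.ReflTransGen.head (b := (i - 1, j)) ?_ (Relation.ReflTransGen.single ?_)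
    · exact Dadj_symm (dadj_NW' i j h00 (by simp) (by simp) (by simp) (by simp))
    · exact dadj_NE' i (j + 1) h01 (by simp) (by simp) (by simp) (by simp)
  have pathB : interiorVertex S (i + 1, j) → interiorVertex S (i + 1, j + 1) →
      DR S (i, j - 1) (i, j + 1) := by
    intro h10 h11
    refine Relation.ReflTransGen.head (b := (i + 1, j)) ?_ (Relation.ReflTransGen.single ?_)
    · exact dadj_NE' (i + 1) j h10 (by simp) (by simp) (by simp) (by simp)
    · exact Dadj_symm (dadj_NW' (i + 1) (j + 1) h11 (by simp) (by simp) (by simp) (by simp))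
  rcases edgeD h hb ha with h00 | h10 <;> rcases edgeU h hb hc with h01 | h11
  · exact pathA h00 h01
  · rcases diag2 h hb h00 h11 with h10 | h01
    · exact pathB h10 h11
    · exact pathA h00 h01
  · rcases diag1 h hb h10 h01 with h00 | h11
    · exact pathA h00 h01
    · exact pathB h10 h11
  · exact pathB h10 h11

lemma caseLD (h : Standing S) (i j : ℤ) (hb : (i, j) ∈ S) (ha : (i - 1, j) ∈ S)
    (hc : (i, j - 1) ∈ S) : DR S (i - 1, j) (i, j - 1) := by
  by_cases h00 : interiorVertex S (i, j)
  · exact Relation.ReflTransGen.single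
      (dadj_NW' i j h00 (by simp) (by simp) (by simp) (by simp))
  have h01 : interiorVertex S (i, j + 1) := (edgeL h hb ha).resolve_left h00
  have h10 : interiorVertex S (i + 1, j) := (edgeD h hb hc).resolve_left h00
  rcases diag1 h hb h10 h01 with h00' | h11
  · exact absurd h00' h00
  refine Relation.ReflTransGen.head (b := (i, j + 1)) ?_
    (Relation.ReflTransGen.head (b := (i + 1, j)) ?_ (Relation.ReflTransGen.single ?_))
  · exact dadj_NE' i (j + 1) h01 (by simp) (by simp) (by simp) (by simp)
  · exact dadj_NW' (i + 1) (j + 1) h11 (by simp) (by simp) (by simp) (by simp)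
  · exact Dadj_symm (dadj_NE' (i + 1) j h10 (by simp) (by simp) (by simp) (by simp))

lemma caseLU (h : Standing S) (i j : ℤ) (hb : (i, j) ∈ S) (ha : (i - 1, j) ∈ S)
    (hc : (i, j + 1) ∈ S) : DR S (i - 1, j) (i, j + 1) := by
  by_cases h01 : interiorVertex S (i, j + 1)
  · exact Relation.ReflTransGen.single
      (dadj_NE' i (j + 1) h01 (by simp) (by simp) (by simp) (by simp))
  have h00 : interiorVertex S (i, j) := (edgeL h hb ha).resolve_right h01
  have h11 : interiorVertex S (i + 1, j + 1) := (edgeU h hb hc).resolve_left h01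
  rcases diag2 h hb h00 h11 with h10 | h01'
  swap
  · exact absurd h01' h01
  refine Relation.ReflTransGen.head (b := (i, j - 1)) ?_
    (Relation.ReflTransGen.head (b := (i + 1, j)) ?_ (Relation.ReflTransGen.single ?_))
  · exact dadj_NW' i j h00 (by simp) (by simp) (by simp) (by simp)
  · exact dadj_NE' (i + 1) j h10 (by simp) (by simp) (by simp) (by simp)
  · exact Dadj_symm (dadj_NW' (i + 1) (j + 1) h11 (by simp) (by simp) (by simp) (by simp))

lemma caseRD (h : Standing S) (i j : ℤ) (hb : (i, j) ∈ S) (ha : (i + 1, j) ∈ S)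
    (hc : (i, j - 1) ∈ S) : DR S (i + 1, j) (i, j - 1) := by
  by_cases h10 : interiorVertex S (i + 1, j)
  · exact Relation.ReflTransGen.single
      (Dadj_symm (dadj_NE' (i + 1) j h10 (by simp) (by simp) (by simp) (by simp)))
  have h11 : interiorVertex S (i + 1, j + 1) := (edgeR h hb ha).resolve_left h10
  have h00 : interiorVertex S (i, j) := (edgeD h hb hc).resolve_right h10
  rcases diag2 h hb h00 h11 with h10' | h01
  · exact absurd h10' h10
  refine Relation.ReflTransGen.head (b := (i, j + 1)) ?_
    (Relation.ReflTransGen.head (b := (i - 1, j)) ?_ (Relation.ReflTransGen.single ?_))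
  · exact Dadj_symm (dadj_NW' (i + 1) (j + 1) h11 (by simp) (by simp) (by simp) (by simp))
  · exact Dadj_symm (dadj_NE' i (j + 1) h01 (by simp) (by simp) (by simp) (by simp))
  · exact dadj_NW' i j h00 (by simp) (by simp) (by simp) (by simp)

lemma caseRU (h : Standing S) (i j : ℤ) (hb : (i, j) ∈ S) (ha : (i + 1, j) ∈ S)
    (hc : (i, j + 1) ∈ S) : DR S (i + 1, j) (i, j + 1) := by
  by_cases h11 : interiorVertex S (i + 1, j + 1)
  · exact Relation.ReflTransGen.single
      (Dadj_symm (dadj_NW' (i + 1) (j + 1) h11 (by simp) (by simp) (by simp) (by simp)))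
  have h10 : interiorVertex S (i + 1, j) := (edgeR h hb ha).resolve_right h11
  have h01 : interiorVertex S (i, j + 1) := (edgeU h hb hc).resolve_right h11
  rcases diag1 h hb h10 h01 with h00 | h11'
  swap
  · exact absurd h11' h11
  refine Relation.ReflTransGen.head (b := (i, j - 1)) ?_
    (Relation.ReflTransGen.head (b := (i - 1, j)) ?_ (Relation.ReflTransGen.single ?_))
  · exact Dadj_symm (dadj_NE' (i + 1) j h10 (by simp) (by simp) (by simp) (by simp))
  · exact Dadj_symm (dadj_NW' i j h00 (by simp) (by simp) (by simp) (by simp))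
  · exact dadj_NE' i (j + 1) h01 (by simp) (by simp) (by simp) (by simp)

end Cases

section TwoStep

variable {S : Finset (ℤ × ℤ)}

lemma two_step (h : Standing S) {a b c : ℤ × ℤ} (hab : Eadj S a b) (hbc : Eadj S b c) :
    DR S a c := by
  obtain ⟨ha, hb, hd1⟩ := hab
  obtain ⟨-, hc, hd2⟩ := hbc
  obtain ⟨i, j⟩ := b
  rcases hd1 with h' | h' | h' | h'
  · have e1 : i = a.1 + 1 := congrArg Prod.fst h'
    have e2 : j = a.2 := congrArg Prod.snd h'
    obtain rfl : a = (i - 1, j) := Prod.ext (by omega) (by omega)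
    rcases hd2 with rfl | rfl | rfl | rfl
    · exact caseLR h i j hb ha hc
    · exact Relation.ReflTransGen.refl
    · exact caseLU h i j hb ha hc
    · exact caseLD h i j hb ha hc
  · have e1 : i = a.1 - 1 := congrArg Prod.fst h'
    have e2 : j = a.2 := congrArg Prod.snd h'
    obtain rfl : a = (i + 1, j) := Prod.ext (by omega) (by omega)
    rcases hd2 with rfl | rfl | rfl | rfl
    · exact Relation.ReflTransGen.refl
    · exact DR_symm (caseLR h i j hb hc ha)
    · exact caseRU h i j hb ha hc
    · exact caseRD h i j hb ha hc
  · have e1 : i = a.1 := congrArg Prod.fst h'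
    have e2 : j = a.2 + 1 := congrArg Prod.snd h'
    obtain rfl : a = (i, j - 1) := Prod.ext (by omega) (by omega)
    rcases hd2 with rfl | rfl | rfl | rfl
    · exact DR_symm (caseRD h i j hb hc ha)
    · exact DR_symm (caseLD h i j hb hc ha)
    · exact caseDU h i j hb ha hc
    · exact Relation.ReflTransGen.refl
  · have e1 : i = a.1 := congrArg Prod.fst h'
    have e2 : j = a.2 - 1 := congrArg Prod.snd h'
    obtain rfl : a = (i, j + 1) := Prod.ext (by omega) (by omega)
    rcases hd2 with rfl | rfl | rfl | rfl
    · exact DR_symm (caseRU h i j hb hc ha)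
    · exact DR_symm (caseLU h i j hb hc ha)
    · exact Relation.ReflTransGen.refl
    · exact DR_symm (caseDU h i j hb hc ha)

lemma eadj_flip {a b : ℤ × ℤ} (hab : Eadj S a b) : ¬ (isRed a ↔ isRed b) := by
  obtain ⟨-, -, hd⟩ := hab
  obtain ⟨i, j⟩ := a
  rcases hd with rfl | rfl | rfl | rfl <;> simp only [isRed] <;> omega

/-- Edge-connectivity plus equal color gives diagonal connectivity. -/
lemma ereach_to_dreach (h : Standing S) {a c : ℤ × ℤ}
    (hr : Relation.ReflTransGen (Eadj S) a c) :
    ((isRed a ↔ isRed c) → DR S a c) ∧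
      (¬ (isRed a ↔ isRed c) → ∀ m, Eadj S c m → DR S a m) := by
  induction hr with
  | refl => exact ⟨fun _ => Relation.ReflTransGen.refl, fun hn => absurd Iff.rfl hn⟩
  | @tail b c hab hbc ih =>
      constructor
      · intro hsame
        have hdiff : ¬ (isRed a ↔ isRed b) := by
          have := eadj_flip (S := S) hbc; tauto
        exact ih.2 hdiff c hbc
      · intro hdiff m hcm
        have hsame : isRed a ↔ isRed b := by
          have h1 := eadj_flip (S := S) hbc
          have h2 := eadj_flip (S := S) hcm
          tauto
        exact Relation.ReflTransGen.trans (ih.1 hsame) (two_step h hbc hcm)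

end TwoStep

section Topology

variable {S : Finset (ℤ × ℤ)}

lemma unitSq_subset_meshRegion {q : ℤ × ℤ} (hq : q ∈ S) : unitSq q ⊆ meshRegion S :=
  Set.subset_biUnion_of_mem hq

lemma isClosed_unitSq (q : ℤ × ℤ) : IsClosed (unitSq q) :=
  IsClosed.prod isClosed_Icc isClosed_Icc

lemma uniqueCell {r q : ℤ × ℤ} {x : ℝ × ℝ} (hx : x ∈ unitSq r)
    (h1 : (q.1 : ℝ) < x.1) (h2 : x.1 < q.1 + 1) (h3 : (q.2 : ℝ) < x.2) (h4 : x.2 < q.2 + 1) :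
    r = q := by
  obtain ⟨⟨a1, a2⟩, b1, b2⟩ := hx
  have c1 : (q.1 : ℝ) < (r.1 : ℝ) + 1 := lt_of_lt_of_le h1 a2
  have c2 : (r.1 : ℝ) < (q.1 : ℝ) + 1 := lt_of_le_of_lt a1 h2
  have c3 : (q.2 : ℝ) < (r.2 : ℝ) + 1 := lt_of_lt_of_le h3 b2
  have c4 : (r.2 : ℝ) < (q.2 : ℝ) + 1 := lt_of_le_of_lt b1 h4
  have d1 : q.1 < r.1 + 1 := by exact_mod_cast c1
  have d2 : r.1 < q.1 + 1 := by exact_mod_cast c2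
  have d3 : q.2 < r.2 + 1 := by exact_mod_cast c3
  have d4 : r.2 < q.2 + 1 := by exact_mod_cast c4
  exact Prod.ext (by omega) (by omega)

lemma exists_cell {x : ℝ × ℝ} (hx : x ∈ meshRegion S) : ∃ q ∈ S, x ∈ unitSq q := by
  simpa [meshRegion, Set.mem_iUnion₂] using hx

/-- an integer point in the open region is an interior vertex -/
lemma interiorVertex_of_mem_interior {v : ℤ × ℤ}
    (hx : (((v.1 : ℝ)), ((v.2 : ℝ))) ∈ interior (meshRegion S)) : interiorVertex S v := by
  obtain ⟨ε, hε, hball⟩ := Metric.isOpen_iff.mp isOpen_interior _ hx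
  have hsub : Metric.ball (((v.1 : ℝ)), ((v.2 : ℝ))) ε ⊆ meshRegion S :=
    hball.trans interior_subset
  set δ : ℝ := min (ε / 2) (1 / 2) with hδdef
  have hδ0 : 0 < δ := lt_min (by linarith) (by norm_num)
  have hδε : δ < ε := lt_of_le_of_lt (min_le_left _ _) (by linarith)
  have hδhalf : δ ≤ 1 / 2 := min_le_right _ _
  have key : ∀ s₁ s₂ : ℝ, |s₁| = 1 → |s₂| = 1 →
      ((v.1 : ℝ) + s₁ * δ, (v.2 : ℝ) + s₂ * δ) ∈ meshRegion S := by
    intro s₁ s₂ hs₁ hs₂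
    apply hsub
    rw [Metric.mem_ball, Prod.dist_eq]
    have e1 : dist ((v.1 : ℝ) + s₁ * δ) ((v.1 : ℝ)) = |s₁| * |δ| := by
      rw [Real.dist_eq, add_sub_cancel_left, abs_mul]
    have e2 : dist ((v.2 : ℝ) + s₂ * δ) ((v.2 : ℝ)) = |s₂| * |δ| := by
      rw [Real.dist_eq, add_sub_cancel_left, abs_mul]
    have : |δ| = δ := abs_of_pos hδ0
    simp only [e1, e2, hs₁, hs₂, one_mul, this]
    exact max_lt hδε hδε
  have cell : ∀ s₁ s₂ : ℝ, ∀ w : ℤ × ℤ, |s₁| = 1 → |s₂| = 1 →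
      ((w.1 : ℝ) < (v.1 : ℝ) + s₁ * δ) → ((v.1 : ℝ) + s₁ * δ < (w.1 : ℝ) + 1) →
      ((w.2 : ℝ) < (v.2 : ℝ) + s₂ * δ) → ((v.2 : ℝ) + s₂ * δ < (w.2 : ℝ) + 1) → w ∈ S := by
    intro s₁ s₂ w hs₁ hs₂ g1 g2 g3 g4
    obtain ⟨q, hq, hxq⟩ := exists_cell (key s₁ s₂ hs₁ hs₂)
    have := uniqueCell (q := w) hxq g1 g2 g3 g4
    exact this ▸ hq
  have habs : |(1 : ℝ)| = 1 := abs_one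
  have habs' : |(-1 : ℝ)| = 1 := abs_neg (1:ℝ) ▸ abs_one
  refine ⟨?_, ?_, ?_, ?_⟩
  · refine cell (-1) (-1) (v.1 - 1, v.2 - 1) habs' habs' ?_ ?_ ?_ ?_ <;> push_cast <;> nlinarith
  · refine cell (-1) 1 (v.1 - 1, v.2) habs' habs ?_ ?_ ?_ ?_ <;> push_cast <;> nlinarith
  · refine cell 1 (-1) (v.1, v.2 - 1) habs habs' ?_ ?_ ?_ ?_ <;> push_cast <;> nlinarith
  · refine cell 1 1 (v.1, v.2) habs habs ?_ ?_ ?_ ?_ <;> push_cast <;> nlinarith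

abbrev ER (S : Finset (ℤ × ℤ)) := Relation.ReflTransGen (Eadj S)

lemma ER_symm {a c : ℤ × ℤ} (h : ER S a c) : ER S c a :=
  (@Relation.ReflTransGen.stdSymm _ (Eadj S) ⟨fun _ _ hab => Eadj_symm hab⟩).symm _ _ h

/-- all four squares around an interior vertex are mutually edge-reachable -/
lemma around {v : ℤ × ℤ} (hv : interiorVertex S v) {r r' : ℤ × ℤ}
    (hr : r = (v.1 - 1, v.2 - 1) ∨ r = (v.1 - 1, v.2) ∨ r = (v.1, v.2 - 1) ∨ r = v)
    (hr' : r' = (v.1 - 1, v.2 - 1) ∨ r' = (v.1 - 1, v.2) ∨ r' = (v.1, v.2 - 1) ∨ r' = v) :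
    ER S r r' := by
  obtain ⟨m1, m2, m3, m4⟩ := hv
  have s1 : Eadj S (v.1 - 1, v.2 - 1) (v.1 - 1, v.2) :=
    ⟨m1, m2, Or.inr (Or.inr (Or.inl (Prod.ext (by simp) (by simp))))⟩
  have s2 : Eadj S (v.1 - 1, v.2 - 1) (v.1, v.2 - 1) :=
    ⟨m1, m3, Or.inl (Prod.ext (by simp) (by simp))⟩
  have s3 : Eadj S (v.1 - 1, v.2) v :=
    ⟨m2, m4, Or.inl (Prod.ext (by simp) (by simp))⟩
  have p1 : ER S (v.1 - 1, v.2 - 1) (v.1 - 1, v.2 - 1) := Relation.ReflTransGen.refl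
  have p2 : ER S (v.1 - 1, v.2 - 1) (v.1 - 1, v.2) := Relation.ReflTransGen.single s1
  have p3 : ER S (v.1 - 1, v.2 - 1) (v.1, v.2 - 1) := Relation.ReflTransGen.single s2
  have p4 : ER S (v.1 - 1, v.2 - 1) v := Relation.ReflTransGen.head s1 (.single s3)
  rcases hr with rfl | rfl | rfl | rfl <;> rcases hr' with rfl | rfl | rfl | rfl
  · exact p1
  · exact p2
  · exact p3
  · exact p4
  · exact (ER_symm p2).trans p1
  · exact (ER_symm p2).trans p2
  · exact (ER_symm p2).trans p3
  · exact (ER_symm p2).trans p4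
  · exact (ER_symm p3).trans p1
  · exact (ER_symm p3).trans p2
  · exact (ER_symm p3).trans p3
  · exact (ER_symm p3).trans p4
  · exact (ER_symm p4).trans p1
  · exact (ER_symm p4).trans p2
  · exact (ER_symm p4).trans p3
  · exact (ER_symm p4).trans p4

end Topology

section Overlap

variable {S : Finset (ℤ × ℤ)}

lemma overlap {r r' : ℤ × ℤ} (hr : r ∈ S) (hr' : r' ∈ S) {x : ℝ × ℝ}
    (hxint : x ∈ interior (meshRegion S)) (hx1 : x ∈ unitSq r) (hx2 : x ∈ unitSq r') :
    ER S r r' := by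
  obtain ⟨⟨a1, a2⟩, b1, b2⟩ := hx1
  obtain ⟨⟨c1, c2⟩, d1, d2⟩ := hx2
  have e1 : r.1 ≤ r'.1 + 1 := by exact_mod_cast a1.trans c2
  have e2 : r'.1 ≤ r.1 + 1 := by exact_mod_cast c1.trans a2
  have e3 : r.2 ≤ r'.2 + 1 := by exact_mod_cast b1.trans d2
  have e4 : r'.2 ≤ r.2 + 1 := by exact_mod_cast d1.trans b2
  have h1 : r'.1 = r.1 - 1 ∨ r'.1 = r.1 ∨ r'.1 = r.1 + 1 := by omega
  have h2 : r'.2 = r.2 - 1 ∨ r'.2 = r.2 ∨ r'.2 = r.2 + 1 := by omega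
  rcases h1 with f1 | f1 | f1 <;> rcases h2 with f2 | f2 | f2
  -- (-1, -1) : shared corner is r
  · have g1 : x.1 = ((r.1 : ℤ) : ℝ) := by
      refine le_antisymm ?_ a1
      calc x.1 ≤ (r'.1 : ℝ) + 1 := c2
        _ = (r.1 : ℝ) := by push_cast [f1]; try ring
    have g2 : x.2 = ((r.2 : ℤ) : ℝ) := by
      refine le_antisymm ?_ b1
      calc x.2 ≤ (r'.2 : ℝ) + 1 := d2
        _ = (r.2 : ℝ) := by push_cast [f2]; try ring
    have hx : x = (((r.1 : ℤ) : ℝ), ((r.2 : ℤ) : ℝ)) := Prod.ext g1 g2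
    have hv := interiorVertex_of_mem_interior (v := r) (hx ▸ hxint)
    exact around hv (Or.inr (Or.inr (Or.inr rfl)))
      (Or.inl (Prod.ext (by omega) (by omega)))
  -- (-1, 0)
  · exact Relation.ReflTransGen.single
      ⟨hr, hr', Or.inr (Or.inl (Prod.ext (by omega) (by omega)))⟩
  -- (-1, +1) : shared corner v = (r.1, r.2 + 1)
  · have g1 : x.1 = ((r.1 : ℤ) : ℝ) := by
      refine le_antisymm ?_ a1
      calc x.1 ≤ (r'.1 : ℝ) + 1 := c2
        _ = (r.1 : ℝ) := by push_cast [f1]; try ring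
    have g2 : x.2 = ((r.2 + 1 : ℤ) : ℝ) := by
      refine le_antisymm ?_ ?_
      · push_cast; exact b2
      · calc ((r.2 + 1 : ℤ) : ℝ) = (r'.2 : ℝ) := by push_cast [f2]; try ring
          _ ≤ x.2 := d1
    have hx : x = (((r.1 : ℤ) : ℝ), ((r.2 + 1 : ℤ) : ℝ)) := Prod.ext g1 g2
    have hv := interiorVertex_of_mem_interior (v := (r.1, r.2 + 1)) (hx ▸ hxint)
    exact around hv (Or.inr (Or.inr (Or.inl (Prod.ext (by simp) (by simp)))))
      (Or.inr (Or.inl (Prod.ext (by omega) (by omega))))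
  -- (0, -1)
  · exact Relation.ReflTransGen.single
      ⟨hr, hr', Or.inr (Or.inr (Or.inr (Prod.ext (by omega) (by omega))))⟩
  -- (0, 0)
  · have : r = r' := Prod.ext (by omega) (by omega)
    exact this ▸ Relation.ReflTransGen.refl
  -- (0, +1)
  · exact Relation.ReflTransGen.single
      ⟨hr, hr', Or.inr (Or.inr (Or.inl (Prod.ext (by omega) (by omega))))⟩
  -- (+1, -1) : shared corner v = (r.1 + 1, r.2)
  · have g1 : x.1 = ((r.1 + 1 : ℤ) : ℝ) := by
      refine le_antisymm ?_ ?_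
      · push_cast; exact a2
      · calc ((r.1 + 1 : ℤ) : ℝ) = (r'.1 : ℝ) := by push_cast [f1]; try ring
          _ ≤ x.1 := c1
    have g2 : x.2 = ((r.2 : ℤ) : ℝ) := by
      refine le_antisymm ?_ b1
      calc x.2 ≤ (r'.2 : ℝ) + 1 := d2
        _ = (r.2 : ℝ) := by push_cast [f2]; try ring
    have hx : x = (((r.1 + 1 : ℤ) : ℝ), ((r.2 : ℤ) : ℝ)) := Prod.ext g1 g2
    have hv := interiorVertex_of_mem_interior (v := (r.1 + 1, r.2)) (hx ▸ hxint)
    exact around hv (Or.inr (Or.inl (Prod.ext (by simp) (by simp))))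
      (Or.inr (Or.inr (Or.inl (Prod.ext (by omega) (by omega)))))
  -- (+1, 0)
  · exact Relation.ReflTransGen.single
      ⟨hr, hr', Or.inl (Prod.ext (by omega) (by omega))⟩
  -- (+1, +1) : shared corner v = (r.1 + 1, r.2 + 1) = r'
  · have g1 : x.1 = ((r.1 + 1 : ℤ) : ℝ) := by
      refine le_antisymm ?_ ?_
      · push_cast; exact a2
      · calc ((r.1 + 1 : ℤ) : ℝ) = (r'.1 : ℝ) := by push_cast [f1]; try ring
          _ ≤ x.1 := c1
    have g2 : x.2 = ((r.2 + 1 : ℤ) : ℝ) := by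
      refine le_antisymm ?_ ?_
      · push_cast; exact b2
      · calc ((r.2 + 1 : ℤ) : ℝ) = (r'.2 : ℝ) := by push_cast [f2]; try ring
          _ ≤ x.2 := d1
    have hx : x = (((r.1 + 1 : ℤ) : ℝ), ((r.2 + 1 : ℤ) : ℝ)) := Prod.ext g1 g2
    have hv := interiorVertex_of_mem_interior (v := (r.1 + 1, r.2 + 1)) (hx ▸ hxint)
    exact around hv (Or.inl (Prod.ext (by simp) (by simp)))
      (Or.inr (Or.inr (Or.inr (Prod.ext (by omega) (by omega)))))

lemma center_mem_interior {q : ℤ × ℤ} (hq : q ∈ S) :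
    ((q.1 : ℝ) + 1 / 2, (q.2 : ℝ) + 1 / 2) ∈ interior (meshRegion S) := by
  have hopen : IsOpen (Set.Ioo (q.1 : ℝ) (q.1 + 1) ×ˢ Set.Ioo (q.2 : ℝ) (q.2 + 1)) :=
    isOpen_Ioo.prod isOpen_Ioo
  have hsub : Set.Ioo (q.1 : ℝ) (q.1 + 1) ×ˢ Set.Ioo (q.2 : ℝ) (q.2 + 1) ⊆ meshRegion S :=
    fun y hy => unitSq_subset_meshRegion hq ⟨Set.Ioo_subset_Icc_self hy.1, Set.Ioo_subset_Icc_self hy.2⟩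
  refine interior_maximal hsub hopen ⟨?_, ?_⟩ <;> constructor <;> norm_num

lemma center_unique {q r : ℤ × ℤ} (hx : ((q.1 : ℝ) + 1 / 2, (q.2 : ℝ) + 1 / 2) ∈ unitSq r) :
    r = q :=
  uniqueCell hx (by norm_num) (by norm_num) (by norm_num) (by norm_num)

/-- edge-connectivity of the mesh, from topological connectedness of the interior -/
lemma econn (h : Standing S) {Q Q' : ℤ × ℤ} (hQ : Q ∈ S) (hQ' : Q' ∈ S) : ER S Q Q' := by
  by_contra hne
  set A : Set (ℝ × ℝ) := ⋃ r ∈ {r : ℤ × ℤ | r ∈ S ∧ ER S Q r}, unitSq r with hA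
  set B : Set (ℝ × ℝ) := ⋃ r ∈ {r : ℤ × ℤ | r ∈ S ∧ ¬ ER S Q r}, unitSq r with hB
  have hAfin : Set.Finite {r : ℤ × ℤ | r ∈ S ∧ ER S Q r} :=
    S.finite_toSet.subset fun r hr => hr.1
  have hBfin : Set.Finite {r : ℤ × ℤ | r ∈ S ∧ ¬ ER S Q r} :=
    S.finite_toSet.subset fun r hr => hr.1
  have hAc : IsClosed A := hAfin.isClosed_biUnion fun q _ => isClosed_unitSq q
  have hBc : IsClosed B := hBfin.isClosed_biUnion fun q _ => isClosed_unitSq q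
  have hpre := h.connected.isPreconnected
  have hsub : interior (meshRegion S) ⊆ Bᶜ ∪ Aᶜ := by
    intro x hx
    by_contra hcon
    simp only [Set.mem_union, Set.mem_compl_iff, not_or, not_not] at hcon
    obtain ⟨hxB, hxA⟩ := hcon
    obtain ⟨r, hrmem, hxr⟩ := Set.mem_iUnion₂.mp hxA
    obtain ⟨r', hrmem', hxr'⟩ := Set.mem_iUnion₂.mp hxB
    exact hrmem'.2 (hrmem.2.trans (overlap hrmem.1 hrmem'.1 hx hxr hxr'))
  have hQmem : ((Q.1 : ℝ) + 1 / 2, (Q.2 : ℝ) + 1 / 2) ∈ interior (meshRegion S) ∩ Bᶜ := by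
    refine ⟨center_mem_interior hQ, fun hmem => ?_⟩
    obtain ⟨r, hrmem, hxr⟩ := Set.mem_iUnion₂.mp hmem
    exact hrmem.2 ((center_unique hxr) ▸ Relation.ReflTransGen.refl)
  have hQ'mem : ((Q'.1 : ℝ) + 1 / 2, (Q'.2 : ℝ) + 1 / 2) ∈ interior (meshRegion S) ∩ Aᶜ := by
    refine ⟨center_mem_interior hQ', fun hmem => ?_⟩
    obtain ⟨r, hrmem, hxr⟩ := Set.mem_iUnion₂.mp hmem
    exact hne ((center_unique hxr) ▸ hrmem.2)
  obtain ⟨x, hxint, hxBc, hxAc⟩ :=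
    hpre Bᶜ Aᶜ hBc.isOpen_compl hAc.isOpen_compl hsub ⟨_, hQmem⟩ ⟨_, hQ'mem⟩
  obtain ⟨r, hrS, hxr⟩ := exists_cell (interior_subset hxint)
  by_cases hreach : ER S Q r
  · exact hxAc (Set.mem_iUnion₂.mpr ⟨r, ⟨hrS, hreach⟩, hxr⟩)
  · exact hxBc (Set.mem_iUnion₂.mpr ⟨r, ⟨hrS, hreach⟩, hxr⟩)

end Overlap

/-- Under the standing assumptions, for any two distinct squares `Q, Q'` of
`S` of the same color there exists `c : ℤ × ℤ → ℝ × ℝ` supported on the interior vertices such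
that `(Dc)(Q) = 1`, `(Dc)(Q') = −1`, and `(Dc)(Q'') = 0` for every other square `Q''` of `S`. -/
theorem exists_div_indicator (S : Finset (ℤ × ℤ)) (h : Standing S)
    (Q Q' : ℤ × ℤ) (hQ : Q ∈ S) (hQ' : Q' ∈ S) (hne : Q ≠ Q')
    (hcolor : isRed Q ↔ isRed Q') :
    ∃ c : ℤ × ℤ → ℝ × ℝ, (∀ v : ℤ × ℤ, ¬ interiorVertex S v → c v = 0) ∧
      Ddiv c Q = 1 ∧ Ddiv c Q' = -1 ∧
      ∀ q ∈ S, q ≠ Q → q ≠ Q' → Ddiv c q = 0 := by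
  have her : ER S Q Q' := econn h hQ hQ'
  have hdr : DR S Q Q' := (ereach_to_dreach h her).1 hcolor
  obtain ⟨c, hsupp, hdiv⟩ := dreach_dipole hdr
  refine ⟨c, hsupp, ?_, ?_, ?_⟩
  · rw [hdiv Q]; simp [hne]
  · rw [hdiv Q']; simp [Ne.symm hne]
  · intro q hq h1 h2; rw [hdiv q]; simp [h1, h2]
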